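/- arXiv:0705.2932 — 2 statements merged into one kernel-verified Lean document; each statement's English description precedes it below -/
import Mathlib

section
/- For every natural number n, Σ_{λ ∈ P(n)} 2·ℓ(λ^d) = Σ_{λ ∈ P(n)} 2·ℓ(λ^e), where the sums run over all partitions λ of n. -/
/-- `s` is (the multiset of parts of) a partition of `n`: all parts are positive and sum to `n`. -/
def IsPartitionOf (n : ℕ) (s : Multiset ℕ) : Prop :=
  (∀ x ∈ s, 0 < x) ∧ s.sum = n

/-- `λ^r`: the part `i` occurs once if its multiplicity in `s` is odd, and not at all otherwise. -/
def rPart (s : Multiset ℕ) : Multiset ℕ :=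
  s.dedup.filter (fun i => Odd (s.count i))

/-- `λ^d`: the part `i` occurs `⌊m_i(λ)/2⌋` times (i.e. `(m_i-1)/2` if `m_i` odd, `m_i/2` if even). -/
def dPart (s : Multiset ℕ) : Multiset ℕ :=
  ∑ i ∈ s.toFinset, Multiset.replicate (s.count i / 2) i

/-- `λ^o`: the odd parts of `λ`. -/
def oPart (s : Multiset ℕ) : Multiset ℕ :=
  s.filter (fun x => Odd x)

/-- `λ^e`: the halves of the even parts of `λ`. -/
def ePart (s : Multiset ℕ) : Multiset ℕ :=
  (s.filter (fun x => Even x)).map (fun x => x / 2)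

/-- The `p`-Glaisher map: each part `x = p^a * q` (with `p ∤ q`) is replaced by `p^a` copies of `q`. -/
def glaisher (p : ℕ) (s : Multiset ℕ) : Multiset ℕ :=
  s.bind (fun x => Multiset.replicate (p ^ (Nat.factorization x p)) (x / p ^ (Nat.factorization x p)))

/-- `λ^{r(p)}`: the part `i` occurs `m_i(λ) mod p` times. -/
def rPartP (p : ℕ) (s : Multiset ℕ) : Multiset ℕ :=
  ∑ i ∈ s.toFinset, Multiset.replicate (s.count i % p) i

/-- `λ^{d(p)}`: the part `i` occurs `(m_i(λ) - (m_i(λ) mod p))/p` times. -/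
def dPartP (p : ℕ) (s : Multiset ℕ) : Multiset ℕ :=
  ∑ i ∈ s.toFinset, Multiset.replicate (s.count i / p) i

lemma card_finset_sum (t : Finset ℕ) (f : ℕ → Multiset ℕ) :
    (∑ i ∈ t, f i).card = ∑ i ∈ t, (f i).card := by
  classical
  induction t using Finset.induction with
  | empty => simp
  | insert _ _ h ih => simp [Finset.sum_insert h, ih]

/-- The involution on multisets swapping the roles of parts `i` and `2*i`. -/
def psi (i : ℕ) (s : Multiset ℕ) : Multiset ℕ :=
  s.filter (fun x => x ≠ i ∧ x ≠ 2*i)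
    + Multiset.replicate (2 * s.count (2*i) + s.count i % 2) i
    + Multiset.replicate (s.count i / 2) (2*i)

lemma count_psi (i : ℕ) (hi : 0 < i) (s : Multiset ℕ) (j : ℕ) :
    (psi i s).count j = if j = i then 2 * s.count (2*i) + s.count i % 2
      else if j = 2*i then s.count i / 2 else s.count j := by
  simp only [psi, Multiset.count_add, Multiset.count_filter, Multiset.count_replicate]
  by_cases h1 : j = i
  · subst h1; split_ifs <;> omega
  · by_cases h2 : j = 2*i
    · subst h2; split_ifs <;> omega
    · split_ifs <;> omega

lemma psi_pos (i : ℕ) (hi : 0 < i) (s : Multiset ℕ) (hs : ∀ x ∈ s, 0 < x) :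
    ∀ x ∈ psi i s, 0 < x := by
  intro x hx
  simp only [psi, Multiset.mem_add, Multiset.mem_filter] at hx
  rcases hx with (hx | hx) | hx
  · exact hs x hx.1
  · rw [Multiset.eq_of_mem_replicate hx]; exact hi
  · rw [Multiset.eq_of_mem_replicate hx]; omega

lemma decomp (i : ℕ) (hi : 0 < i) (s : Multiset ℕ) :
    s = s.filter (fun x => x ≠ i ∧ x ≠ 2*i)
      + Multiset.replicate (s.count i) i + Multiset.replicate (s.count (2*i)) (2*i) := by
  ext j
  simp only [Multiset.count_add, Multiset.count_filter, Multiset.count_replicate]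
  by_cases h1 : j = i
  · subst h1; split_ifs <;> omega
  · by_cases h2 : j = 2*i
    · subst h2; split_ifs <;> omega
    · split_ifs <;> omega

lemma psi_sum (i : ℕ) (hi : 0 < i) (s : Multiset ℕ) : (psi i s).sum = s.sum := by
  conv_rhs => rw [decomp i hi s]
  simp only [psi, Multiset.sum_add, Multiset.sum_replicate, smul_eq_mul]
  have h := Nat.div_add_mod (s.count i) 2
  generalize s.count i / 2 = c at *
  generalize s.count i % 2 = r at *
  rw [← h]
  ring

lemma psi_psi (i : ℕ) (hi : 0 < i) (s : Multiset ℕ) : psi i (psi i s) = s := by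
  ext j
  rw [count_psi i hi, count_psi i hi, count_psi i hi, count_psi i hi]
  by_cases h1 : j = i
  · subst h1; split_ifs <;> omega
  · by_cases h2 : j = 2*i
    · subst h2; split_ifs <;> omega
    · split_ifs <;> omega

/-- The involution on partitions of `n`. -/
def psiEquiv (n i : ℕ) (hi : 0 < i) : Nat.Partition n ≃ Nat.Partition n where
  toFun μ := ⟨psi i μ.parts,
    fun {x} hx => psi_pos i hi μ.parts (fun y hy => μ.parts_pos hy) x hx,
    by rw [psi_sum i hi, μ.parts_sum]⟩
  invFun μ := ⟨psi i μ.parts,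
    fun {x} hx => psi_pos i hi μ.parts (fun y hy => μ.parts_pos hy) x hx,
    by rw [psi_sum i hi, μ.parts_sum]⟩
  left_inv μ := by ext1; exact psi_psi i hi μ.parts
  right_inv μ := by ext1; exact psi_psi i hi μ.parts

lemma per_index (n i : ℕ) :
    ∑ μ : Nat.Partition n, μ.parts.count i / 2 = ∑ μ : Nat.Partition n, μ.parts.count (2*i) := by
  rcases Nat.eq_zero_or_pos i with rfl | hi
  · simp only [mul_zero]
    refine Finset.sum_congr rfl fun μ _ => ?_
    have : μ.parts.count 0 = 0 :=
      Multiset.count_eq_zero_of_notMem (fun h => lt_irrefl 0 (μ.parts_pos h))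
    omega
  · calc ∑ μ : Nat.Partition n, μ.parts.count i / 2
        = ∑ μ : Nat.Partition n, ((psiEquiv n i hi μ).parts.count i / 2) :=
          (Equiv.sum_comp (psiEquiv n i hi) (fun μ => μ.parts.count i / 2)).symm
      _ = ∑ μ : Nat.Partition n, μ.parts.count (2*i) := by
          refine Finset.sum_congr rfl fun μ _ => ?_
          have hparts : ((psiEquiv n i hi) μ).parts = psi i μ.parts := rfl
          rw [hparts, count_psi i hi, if_pos rfl]
          omega

lemma mem_le (n : ℕ) (μ : Nat.Partition n) {x : ℕ} (hx : x ∈ μ.parts) : x ≤ n := by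
  have := Multiset.single_le_sum (fun y _ => Nat.zero_le y) x hx
  rwa [μ.parts_sum] at this

lemma dcard (n : ℕ) (μ : Nat.Partition n) :
    (dPart μ.parts).card = ∑ i ∈ Finset.range (n+1), μ.parts.count i / 2 := by
  rw [dPart, card_finset_sum]
  simp only [Multiset.card_replicate]
  refine Finset.sum_subset ?_ ?_
  · intro x hx
    rw [Multiset.mem_toFinset] at hx
    exact Finset.mem_range.mpr (Nat.lt_succ_of_le (mem_le n μ hx))
  · intro x _ hx
    rw [Multiset.mem_toFinset] at hx
    rw [Multiset.count_eq_zero_of_notMem hx]; rfl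

lemma ecard (n : ℕ) (μ : Nat.Partition n) :
    (ePart μ.parts).card = ∑ i ∈ Finset.range (n+1), μ.parts.count (2*i) := by
  rw [ePart, Multiset.card_map]
  have key : μ.parts.filter (fun x => Even x)
      = ∑ i ∈ Finset.range (n+1), Multiset.replicate (μ.parts.count (2*i)) (2*i) := by
    ext j
    rw [Multiset.count_filter, Multiset.count_sum']
    simp only [Multiset.count_replicate]
    by_cases hj : Even j
    · rw [if_pos hj]
      obtain ⟨k, hk0⟩ := hj
      have hk : j = 2*k := by omega
      by_cases hjn : j ≤ n
      · rw [Finset.sum_eq_single k]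
        · rw [if_pos hk.symm, ← hk]
        · intro b _ hb
          rw [if_neg]; omega
        · intro hk'
          exfalso; exact hk' (Finset.mem_range.mpr (by omega))
      · have hnotmem : j ∉ μ.parts := fun h => hjn (mem_le n μ h)
        rw [Multiset.count_eq_zero_of_notMem hnotmem]
        symm
        apply Finset.sum_eq_zero
        intro b _
        by_cases h : 2*b = j
        · rw [if_pos h, h, Multiset.count_eq_zero_of_notMem hnotmem]
        · rw [if_neg h]
    · rw [if_neg hj]
      symm
      apply Finset.sum_eq_zero
      intro b _
      rw [if_neg (fun h => hj ⟨b, by omega⟩)]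
  rw [key, card_finset_sum]
  simp [Multiset.card_replicate]

/-- `Σ_{λ ∈ P(n)} 2 ℓ(λ^d) = Σ_{λ ∈ P(n)} 2 ℓ(λ^e)`. -/
theorem stmt8 (n : ℕ) :
    ∑ μ : Nat.Partition n, 2 * (dPart μ.parts).card =
      ∑ μ : Nat.Partition n, 2 * (ePart μ.parts).card := by
  simp only [← Finset.mul_sum]
  congr 1
  calc ∑ μ : Nat.Partition n, (dPart μ.parts).card
      = ∑ μ : Nat.Partition n, ∑ i ∈ Finset.range (n+1), μ.parts.count i / 2 :=
        Finset.sum_congr rfl fun μ _ => dcard n μ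
    _ = ∑ i ∈ Finset.range (n+1), ∑ μ : Nat.Partition n, μ.parts.count i / 2 :=
        Finset.sum_comm
    _ = ∑ i ∈ Finset.range (n+1), ∑ μ : Nat.Partition n, μ.parts.count (2*i) :=
        Finset.sum_congr rfl fun i _ => per_index n i
    _ = ∑ μ : Nat.Partition n, ∑ i ∈ Finset.range (n+1), μ.parts.count (2*i) :=
        Finset.sum_comm
    _ = ∑ μ : Nat.Partition n, (ePart μ.parts).card :=
        Finset.sum_congr rfl fun μ _ => (ecard n μ).symm
end

section
/- For every natural number n, Σ_{λ ∈ P(n)} ℓ(λ^o) = Σ_{λ ∈ P(n)} ℓ((λ^r)~), where the sums run over all partitions λ of n and (λ^r)~ denotes the 2-Glaisher image of the strict partition λ^r. -/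
-- basic count lemmas
lemma count_rPart (s : Multiset ℕ) (i : ℕ) : (rPart s).count i = s.count i % 2 := by
  rw [rPart, Multiset.count_filter]
  by_cases h : i ∈ s
  · by_cases ho : Odd (s.count i)
    · simp [ho, Multiset.count_dedup, h, Nat.odd_iff.1 ho]
    · simp [ho, (Nat.even_iff.1 (Nat.not_odd_iff_even.1 ho)).symm]
  · have : s.count i = 0 := Multiset.count_eq_zero.2 h
    simp [this]

lemma count_dPart (s : Multiset ℕ) (i : ℕ) : (dPart s).count i = s.count i / 2 := by
  rw [dPart, Multiset.count_sum']
  by_cases h : i ∈ s.toFinset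
  · rw [Finset.sum_eq_single i]
    · simp [Multiset.count_replicate]
    · intro b _ hb; simp [Multiset.count_replicate, hb]
    · intro hi; exact absurd h hi
  · have : s.count i = 0 := Multiset.count_eq_zero.2 (fun hm => h (Multiset.mem_toFinset.2 hm))
    simp only [this, Nat.zero_div]
    refine Finset.sum_eq_zero fun b hb => ?_
    rw [Multiset.count_replicate, if_neg]
    rintro rfl; exact h hb

lemma rPart_add_two_dPart (s : Multiset ℕ) : rPart s + (dPart s + dPart s) = s := by
  ext i
  simp only [Multiset.count_add, count_rPart, count_dPart]
  omega

lemma glaisher_sum (s : Multiset ℕ) : (glaisher 2 s).sum = s.sum := by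
  rw [glaisher, Multiset.sum_bind]
  have : Multiset.map (fun a => (Multiset.replicate (2 ^ a.factorization 2)
      (a / 2 ^ a.factorization 2)).sum) s = Multiset.map id s := by
    apply Multiset.map_congr rfl
    intro x _
    rw [Multiset.sum_replicate, smul_eq_mul, id]
    exact Nat.ordProj_mul_ordCompl_eq_self x 2
  rw [this, Multiset.map_id]

lemma glaisher_mem {s : Multiset ℕ} {x : ℕ} (hx : x ∈ glaisher 2 s) :
    ∃ y ∈ s, x = y / 2 ^ (Nat.factorization y 2) := by
  rw [glaisher, Multiset.mem_bind] at hx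
  obtain ⟨y, hy, hxy⟩ := hx
  exact ⟨y, hy, (Multiset.eq_of_mem_replicate hxy)⟩

lemma glaisher_odd {s : Multiset ℕ} (hs : ∀ y ∈ s, 0 < y) {x : ℕ} (hx : x ∈ glaisher 2 s) :
    Odd x := by
  obtain ⟨y, hy, rfl⟩ := glaisher_mem hx
  rw [← Nat.not_even_iff_odd, even_iff_two_dvd]
  exact Nat.not_dvd_ordCompl Nat.prime_two (hs y hy).ne'

lemma glaisher_pos {s : Multiset ℕ} (hs : ∀ y ∈ s, 0 < y) {x : ℕ} (hx : x ∈ glaisher 2 s) :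
    0 < x := by
  obtain ⟨y, hy, rfl⟩ := glaisher_mem hx
  exact Nat.ordCompl_pos 2 (hs y hy).ne'

lemma count_glaisher (s : Multiset ℕ) (q : ℕ) :
    (glaisher 2 s).count q =
      ((s.filter (fun x => x / 2 ^ (Nat.factorization x 2) = q)).map
        (fun x => 2 ^ (Nat.factorization x 2))).sum := by
  induction s using Multiset.induction with
  | empty => simp [glaisher]
  | cons a t ih =>
    rw [glaisher, Multiset.cons_bind, Multiset.count_add, ← glaisher, ih,
      Multiset.filter_cons]
    by_cases h : a / 2 ^ (Nat.factorization a 2) = q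
    · simp [h, Multiset.count_replicate]
    · simp [h, Multiset.count_replicate, Ne.symm h]

lemma twoPow_sum_inj {A B : Multiset ℕ} (hA : A.Nodup) (hB : B.Nodup)
    (h : (A.map (fun a => 2 ^ a)).sum = (B.map (fun a => 2 ^ a)).sum) : A = B := by
  have sA := Multiset.sort_eq (α := ℕ) A (· ≤ ·)
  have sB := Multiset.sort_eq (α := ℕ) B (· ≤ ·)
  have sortedA : (Multiset.sort A (· ≤ ·)).SortedLT :=
    (Multiset.pairwise_sort A (· ≤ ·)).sortedLE.sortedLT_of_nodup (by rwa [← Multiset.coe_nodup, sA])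
  have sortedB : (Multiset.sort B (· ≤ ·)).SortedLT :=
    (Multiset.pairwise_sort B (· ≤ ·)).sortedLE.sortedLT_of_nodup (by rwa [← Multiset.coe_nodup, sB])
  have eA := Nat.bitIndices_twoPowsum sortedA
  have eB := Nat.bitIndices_twoPowsum sortedB
  have hA' : ((Multiset.sort A (· ≤ ·)).map (fun i => 2 ^ i)).sum
      = (A.map (fun a => 2 ^ a)).sum := by
    rw [← Multiset.sum_coe, ← Multiset.map_coe, sA]
  have hB' : ((Multiset.sort B (· ≤ ·)).map (fun i => 2 ^ i)).sum
      = (B.map (fun a => 2 ^ a)).sum := by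
    rw [← Multiset.sum_coe, ← Multiset.map_coe, sB]
  rw [hA', h, ← hB', eB] at eA
  rw [← sA, ← sB, eA]

lemma fiber_eq_map (r : Multiset ℕ) (q : ℕ) :
    (r.filter (fun x => x / 2 ^ (Nat.factorization x 2) = q)).map
        ((fun a => 2 ^ a * q) ∘ fun x => Nat.factorization x 2) =
      r.filter (fun x => x / 2 ^ (Nat.factorization x 2) = q) := by
  rw [show (r.filter (fun x => x / 2 ^ (Nat.factorization x 2) = q)).map
        ((fun a => 2 ^ a * q) ∘ fun x => Nat.factorization x 2)
      = (r.filter (fun x => x / 2 ^ (Nat.factorization x 2) = q)).map id from ?_,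
    Multiset.map_id]
  apply Multiset.map_congr rfl
  intro x hx
  have h := (Multiset.mem_filter.1 hx).2
  simp only [Function.comp_apply, id]
  rw [← h]
  exact Nat.ordProj_mul_ordCompl_eq_self x 2

lemma fiber_map_nodup {r : Multiset ℕ} (hr : r.Nodup) (q : ℕ) :
    ((r.filter (fun x => x / 2 ^ (Nat.factorization x 2) = q)).map
      (fun x => Nat.factorization x 2)).Nodup := by
  apply Multiset.Nodup.map_on ?_ (hr.filter _)
  intro x hx y hy hxy
  have hxq := (Multiset.mem_filter.1 hx).2
  have hyq := (Multiset.mem_filter.1 hy).2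
  have ex := Nat.ordProj_mul_ordCompl_eq_self x 2
  have ey := Nat.ordProj_mul_ordCompl_eq_self y 2
  rw [← ex, ← ey, hxq, hyq, hxy]

lemma glaisher_inj {r r' : Multiset ℕ} (hr : r.Nodup) (hr' : r'.Nodup)
    (h : glaisher 2 r = glaisher 2 r') : r = r' := by
  have key : ∀ q, r.filter (fun x => x / 2 ^ (Nat.factorization x 2) = q) =
      r'.filter (fun x => x / 2 ^ (Nat.factorization x 2) = q) := by
    intro q
    have hc : (glaisher 2 r).count q = (glaisher 2 r').count q := by rw [h]
    rw [count_glaisher, count_glaisher] at hc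
    have hmaps : ((r.filter (fun x => x / 2 ^ (Nat.factorization x 2) = q)).map
        (fun x => Nat.factorization x 2)) =
        ((r'.filter (fun x => x / 2 ^ (Nat.factorization x 2) = q)).map
        (fun x => Nat.factorization x 2)) := by
      apply twoPow_sum_inj (fiber_map_nodup hr q) (fiber_map_nodup hr' q)
      rwa [Multiset.map_map, Multiset.map_map]
    calc r.filter (fun x => x / 2 ^ (Nat.factorization x 2) = q)
        = (r.filter (fun x => x / 2 ^ (Nat.factorization x 2) = q)).map
            ((fun a => 2 ^ a * q) ∘ fun x => Nat.factorization x 2) := (fiber_eq_map r q).symm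
      _ = (r'.filter (fun x => x / 2 ^ (Nat.factorization x 2) = q)).map
            ((fun a => 2 ^ a * q) ∘ fun x => Nat.factorization x 2) := by
            rw [← Multiset.map_map, hmaps, Multiset.map_map]
      _ = _ := fiber_eq_map r' q
  ext x
  have h1 : r.count x =
      (r.filter (fun y => y / 2 ^ (Nat.factorization y 2) = x / 2 ^ (Nat.factorization x 2))).count x := by
    rw [Multiset.count_filter, if_pos rfl]
  have h2 : r'.count x =
      (r'.filter (fun y => y / 2 ^ (Nat.factorization y 2) = x / 2 ^ (Nat.factorization x 2))).count x := by
    rw [Multiset.count_filter, if_pos rfl]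
  rw [h1, h2, key]

def phiParts (s : Multiset ℕ) : Multiset ℕ :=
  glaisher 2 (rPart s) + (dPart s).map (fun x => 2 * x)

lemma rPart_nodup (s : Multiset ℕ) : (rPart s).Nodup := (s.nodup_dedup).filter _

lemma rPart_subset {s : Multiset ℕ} {x : ℕ} (hx : x ∈ rPart s) : x ∈ s :=
  Multiset.mem_dedup.1 (Multiset.mem_of_mem_filter hx)

lemma dPart_subset {s : Multiset ℕ} {x : ℕ} (hx : x ∈ dPart s) : x ∈ s := by
  have h := Multiset.count_pos.2 hx
  rw [count_dPart] at h
  exact Multiset.count_pos.1 (by omega)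

lemma rPart_pos {s : Multiset ℕ} (hs : ∀ y ∈ s, 0 < y) : ∀ y ∈ rPart s, 0 < y :=
  fun y hy => hs y (rPart_subset hy)

lemma oPart_phi {s : Multiset ℕ} (hs : ∀ y ∈ s, 0 < y) :
    oPart (phiParts s) = glaisher 2 (rPart s) := by
  rw [oPart, phiParts, Multiset.filter_add,
    Multiset.filter_eq_self.2 (fun a ha => glaisher_odd (rPart_pos hs) ha),
    Multiset.filter_eq_nil.2, add_zero]
  intro a ha
  obtain ⟨b, _, rfl⟩ := Multiset.mem_map.1 ha
  simp [Nat.even_iff, parity_simps]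

lemma ePart_phi {s : Multiset ℕ} (hs : ∀ y ∈ s, 0 < y) :
    ePart (phiParts s) = dPart s := by
  rw [ePart, phiParts, Multiset.filter_add, Multiset.filter_eq_nil.2, zero_add,
    Multiset.filter_eq_self.2, Multiset.map_map]
  · have : ((fun x => x / 2) ∘ fun x => 2 * x) = id := by
      ext x; simp [Nat.mul_div_cancel_left]
    rw [this, Multiset.map_id]
  · intro a ha
    obtain ⟨b, _, rfl⟩ := Multiset.mem_map.1 ha
    exact even_two_mul b
  · intro a ha
    rw [← Nat.not_odd_iff_even]
    simp only [not_not]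
    exact glaisher_odd (rPart_pos hs) ha

lemma phiParts_sum (s : Multiset ℕ) : (phiParts s).sum = s.sum := by
  rw [phiParts, Multiset.sum_add, glaisher_sum]
  have h := congrArg Multiset.sum (rPart_add_two_dPart s)
  rw [Multiset.sum_add, Multiset.sum_add] at h
  rw [Multiset.sum_map_mul_left]
  simp only [Multiset.map_id', two_mul]
  omega

lemma phiParts_pos {s : Multiset ℕ} (hs : ∀ y ∈ s, 0 < y) : ∀ y ∈ phiParts s, 0 < y := by
  intro y hy
  rcases Multiset.mem_add.1 hy with h | h
  · exact glaisher_pos (rPart_pos hs) h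
  · obtain ⟨b, hb, rfl⟩ := Multiset.mem_map.1 h
    have := hs b (dPart_subset hb)
    omega

lemma phiParts_inj {s s' : Multiset ℕ} (hs : ∀ y ∈ s, 0 < y) (hs' : ∀ y ∈ s', 0 < y)
    (h : phiParts s = phiParts s') : s = s' := by
  have ho : glaisher 2 (rPart s) = glaisher 2 (rPart s') := by
    rw [← oPart_phi hs, ← oPart_phi hs', h]
  have hrp : rPart s = rPart s' := glaisher_inj (rPart_nodup s) (rPart_nodup s') ho
  have hdp : dPart s = dPart s' := by rw [← ePart_phi hs, ← ePart_phi hs', h]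
  rw [← rPart_add_two_dPart s, ← rPart_add_two_dPart s', hrp, hdp]


/-- `Σ_{λ ∈ P(n)} ℓ(λ^o) = Σ_{λ ∈ P(n)} ℓ((λ^r)~)`, where `(λ^r)~` is the 2-Glaisher image
of `λ^r`. -/
theorem stmt13 (n : ℕ) :
    ∑ μ : Nat.Partition n, (oPart μ.parts).card =
      ∑ μ : Nat.Partition n, (glaisher 2 (rPart μ.parts)).card := by
  classical
  let Φ : Nat.Partition n → Nat.Partition n := fun μ =>
    ⟨phiParts μ.parts, fun {i} hi => phiParts_pos (fun y hy => μ.parts_pos hy) i hi,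
      by rw [phiParts_sum]; exact μ.parts_sum⟩
  have hinj : Function.Injective Φ := by
    intro μ ν hμν
    ext1
    exact phiParts_inj (fun y hy => μ.parts_pos hy) (fun y hy => ν.parts_pos hy)
      (congrArg Nat.Partition.parts hμν)
  have hbij : Function.Bijective Φ := Finite.injective_iff_bijective.1 hinj
  refine (Fintype.sum_bijective Φ hbij _ _ fun μ => ?_).symm
  show (glaisher 2 (rPart μ.parts)).card = (oPart (phiParts μ.parts)).card
  rw [oPart_phi (fun y hy => μ.parts_pos hy)]
end
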